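/- arXiv:2104.11470 — 3 statements merged into one kernel-verified Lean document; each statement's English description precedes it below -/
import Mathlib

section
/- If f : ℝ^d → ℝ is differentiable with L₁-Lipschitz gradient, then |f_ν(x) − f(x)| ≤ (ν²/2) L₁ d for every x and ν > 0, where f_ν is the Gaussian smoothing of f. -/
open MeasureTheory ProbabilityTheory

section GaussAux

open Real Filter Asymptotics
open scoped ENNReal NNReal InnerProductSpace

private lemma exp_sq_tendsto_top' : Tendsto (fun x : ℝ => rexp (-(1/2) * x ^ 2)) atTop (nhds 0) := by
  apply Real.tendsto_exp_atBot.comp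
  have h : Tendsto (fun x : ℝ => (1/2) * x ^ 2) atTop atTop :=
    (tendsto_pow_atTop two_ne_zero).const_mul_atTop (by norm_num)
  have := tendsto_neg_atTop_atBot.comp h
  refine this.congr fun x => by simp [Function.comp, neg_mul]

private lemma mul_exp_sq_tendsto_top' :
    Tendsto (fun x : ℝ => x * rexp (-(1/2) * x ^ 2)) atTop (nhds 0) := by
  have h := rpow_mul_exp_neg_mul_sq_isLittleO_exp_neg (by norm_num : (0:ℝ) < 1/2) 1
  have h2 : Tendsto (fun x : ℝ => rexp (-(1/2) * x)) atTop (nhds 0) := by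
    apply Real.tendsto_exp_atBot.comp
    have h3 : Tendsto (fun x : ℝ => (1/2) * x) atTop atTop :=
      tendsto_id.const_mul_atTop (by norm_num)
    exact (tendsto_neg_atTop_atBot.comp h3).congr fun x => by simp [Function.comp, neg_mul]
  have := h.isBigO.trans_tendsto h2
  refine this.congr' ?_
  filter_upwards [eventually_gt_atTop (0:ℝ)] with x hx
  rw [Real.rpow_one]

private lemma hasDerivAt_exp_sq' (x : ℝ) :
    HasDerivAt (fun x : ℝ => rexp (-(1/2) * x ^ 2)) (-x * rexp (-(1/2) * x ^ 2)) x := by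
  have h : HasDerivAt (fun x : ℝ => -(1/2) * x ^ 2) (-x) x := by
    have := (hasDerivAt_pow 2 x).const_mul (-(1/2) : ℝ)
    refine this.congr_deriv ?_; push_cast; ring
  have := h.exp
  convert this using 1
  ring

private lemma integrable_mul_exp_sq' : Integrable (fun x : ℝ => x * rexp (-(1/2) * x ^ 2)) :=
  integrable_mul_exp_neg_mul_sq (by norm_num)

private lemma integrable_exp_sq' : Integrable (fun x : ℝ => rexp (-(1/2) * x ^ 2)) :=
  integrable_exp_neg_mul_sq (by norm_num)

private lemma integrable_sq_mul_exp_sq' :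
    Integrable (fun x : ℝ => x ^ 2 * rexp (-(1/2) * x ^ 2)) := by
  have := integrable_rpow_mul_exp_neg_mul_sq (by norm_num : (0:ℝ) < 1/2) (s := 2) (by norm_num)
  simpa [Real.rpow_two] using this

private lemma integral_mul_exp_sq' : ∫ x : ℝ, x * rexp (-(1/2) * x ^ 2) = 0 := by
  have hderiv : ∀ x : ℝ, HasDerivAt (fun x : ℝ => -rexp (-(1/2) * x ^ 2))
      (x * rexp (-(1/2) * x ^ 2)) x := by
    intro x
    simpa [neg_mul] using (hasDerivAt_exp_sq' x).fun_neg
  have htop : Tendsto (fun x : ℝ => -rexp (-(1/2) * x ^ 2)) atTop (nhds 0) := by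
    simpa using exp_sq_tendsto_top'.neg
  have hbot : Tendsto (fun x : ℝ => -rexp (-(1/2) * x ^ 2)) atBot (nhds 0) := by
    have := htop.comp tendsto_neg_atBot_atTop
    refine this.congr fun x => by simp [Function.comp]
  simpa using integral_of_hasDerivAt_of_tendsto hderiv integrable_mul_exp_sq' hbot htop

private lemma integral_sq_sub_exp_sq' :
    ∫ x : ℝ, (x ^ 2 * rexp (-(1/2) * x ^ 2) - rexp (-(1/2) * x ^ 2)) = 0 := by
  have hderiv : ∀ x : ℝ, HasDerivAt (fun x : ℝ => -(x * rexp (-(1/2) * x ^ 2)))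
      (x ^ 2 * rexp (-(1/2) * x ^ 2) - rexp (-(1/2) * x ^ 2)) x := by
    intro x
    have := ((hasDerivAt_id x).fun_mul (hasDerivAt_exp_sq' x)).fun_neg
    refine this.congr_deriv ?_
    simp only [id]; ring
  have htop : Tendsto (fun x : ℝ => -(x * rexp (-(1/2) * x ^ 2))) atTop (nhds 0) := by
    simpa using mul_exp_sq_tendsto_top'.neg
  have hbot : Tendsto (fun x : ℝ => -(x * rexp (-(1/2) * x ^ 2))) atBot (nhds 0) := by
    have := mul_exp_sq_tendsto_top'.comp tendsto_neg_atBot_atTop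
    refine this.congr fun x => by simp [Function.comp]
  simpa using integral_of_hasDerivAt_of_tendsto hderiv
    (integrable_sq_mul_exp_sq'.sub integrable_exp_sq') hbot htop

private lemma pdf_eq' (x : ℝ) :
    gaussianPDFReal 0 1 x = (√(2 * π))⁻¹ * rexp (-(1/2) * x ^ 2) := by
  unfold gaussianPDFReal
  push_cast
  rw [mul_one]
  congr 1
  ring

private lemma aux_integral_gauss (g : ℝ → ℝ) :
    ∫ x, g x ∂(gaussianReal 0 1) = ∫ x, gaussianPDFReal 0 1 x * g x := by
  rw [gaussianReal_of_var_ne_zero 0 one_ne_zero]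
  have hm : Measurable fun x => (gaussianPDFReal 0 1 x).toNNReal :=
    (measurable_gaussianPDFReal 0 1).real_toNNReal
  have h : (gaussianPDF 0 1) = fun x => (((gaussianPDFReal 0 1 x).toNNReal : ℝ≥0) : ℝ≥0∞) := by
    ext x; simp [gaussianPDF, ENNReal.ofReal]
  rw [h, integral_withDensity_eq_integral_smul hm]
  congr 1; ext x
  simp [NNReal.smul_def, Real.coe_toNNReal _ (gaussianPDFReal_nonneg 0 1 x)]

private lemma aux_integrable_gauss_iff (g : ℝ → ℝ) :
    Integrable g (gaussianReal 0 1) ↔ Integrable (fun x => gaussianPDFReal 0 1 x * g x) := by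
  rw [gaussianReal_of_var_ne_zero 0 one_ne_zero]
  have hm : Measurable fun x => (gaussianPDFReal 0 1 x).toNNReal :=
    (measurable_gaussianPDFReal 0 1).real_toNNReal
  have h : (gaussianPDF 0 1) = fun x => (((gaussianPDFReal 0 1 x).toNNReal : ℝ≥0) : ℝ≥0∞) := by
    ext x; simp [gaussianPDF, ENNReal.ofReal]
  rw [h, integrable_withDensity_iff_integrable_smul hm]
  have h2 : (fun x => (gaussianPDFReal 0 1 x).toNNReal • g x)
      = fun x => gaussianPDFReal 0 1 x * g x := by
    ext x; simp [NNReal.smul_def, Real.coe_toNNReal _ (gaussianPDFReal_nonneg 0 1 x)]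
  rw [h2]

private lemma integrable_id_gauss : Integrable (fun x => x) (gaussianReal 0 1) := by
  rw [aux_integrable_gauss_iff]
  have : (fun x => gaussianPDFReal 0 1 x * x)
      = fun x => (√(2 * π))⁻¹ * (x * rexp (-(1/2) * x ^ 2)) := by
    ext x; rw [pdf_eq']; ring
  rw [this]
  exact integrable_mul_exp_sq'.const_mul _

private lemma integrable_sq_gauss : Integrable (fun x => x ^ 2) (gaussianReal 0 1) := by
  rw [aux_integrable_gauss_iff]
  have : (fun x => gaussianPDFReal 0 1 x * x ^ 2)
      = fun x => (√(2 * π))⁻¹ * (x ^ 2 * rexp (-(1/2) * x ^ 2)) := by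
    ext x; rw [pdf_eq']; ring
  rw [this]
  exact integrable_sq_mul_exp_sq'.const_mul _

private lemma integral_id_gauss : ∫ x, x ∂(gaussianReal 0 1) = 0 := by
  rw [aux_integral_gauss]
  have : (fun x => gaussianPDFReal 0 1 x * x)
      = fun x => (√(2 * π))⁻¹ * (x * rexp (-(1/2) * x ^ 2)) := by
    ext x; rw [pdf_eq']; ring
  rw [this, integral_const_mul, integral_mul_exp_sq', mul_zero]

private lemma integral_sq_gauss : ∫ x, x ^ 2 ∂(gaussianReal 0 1) = 1 := by
  rw [aux_integral_gauss]
  have h1 : (fun x => gaussianPDFReal 0 1 x * x ^ 2)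
      = fun x => (√(2 * π))⁻¹ * (x ^ 2 * rexp (-(1/2) * x ^ 2) - rexp (-(1/2) * x ^ 2))
        + gaussianPDFReal 0 1 x := by
    ext x; rw [pdf_eq']; ring
  have hint : Integrable (fun x : ℝ =>
      (√(2 * π))⁻¹ * (x ^ 2 * rexp (-(1/2) * x ^ 2) - rexp (-(1/2) * x ^ 2))) := by
    apply Integrable.const_mul
    exact integrable_sq_mul_exp_sq'.sub integrable_exp_sq'
  rw [h1, integral_add hint (integrable_gaussianPDFReal 0 1)]
  rw [integral_const_mul, integral_sq_sub_exp_sq', mul_zero, zero_add,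
    integral_gaussianPDFReal_eq_one 0 one_ne_zero]

end GaussAux

noncomputable def stdGaussian (d : ℕ) : Measure (EuclideanSpace ℝ (Fin d)) :=
  (Measure.pi fun _ : Fin d => gaussianReal 0 1).map
    (EuclideanSpace.equiv (Fin d) ℝ).symm

section StdGaussAux

open scoped InnerProductSpace

private lemma pi_map_eval (d : ℕ) (i : Fin d) :
    (Measure.pi fun _ : Fin d => gaussianReal 0 1).map (fun y => y i) = gaussianReal 0 1 := by
  ext s hs
  rw [Measure.map_apply (measurable_pi_apply i) hs]
  have h : (fun y : Fin d → ℝ => y i) ⁻¹' s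
      = Set.pi Set.univ (Function.update (fun _ => Set.univ) i s) := Set.eval_preimage
  rw [h, Measure.pi_pi]
  rw [Finset.prod_eq_single i (fun j _ hj => by simp [Function.update_of_ne hj])
    (fun h => absurd (Finset.mem_univ i) h)]
  simp

private lemma integrable_eval_pi {d : ℕ} {g : ℝ → ℝ}
    (hg : Integrable g (gaussianReal 0 1)) (i : Fin d) :
    Integrable (fun y : Fin d → ℝ => g (y i)) (Measure.pi fun _ : Fin d => gaussianReal 0 1) := by
  have h := hg
  rw [← pi_map_eval d i] at h
  exact (integrable_map_measure h.aestronglyMeasurable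
    (measurable_pi_apply i).aemeasurable).mp h

private lemma integral_eval_pi {d : ℕ} {g : ℝ → ℝ} (hg : Measurable g) (i : Fin d) :
    ∫ y, g (y i) ∂(Measure.pi fun _ : Fin d => gaussianReal 0 1)
      = ∫ x, g x ∂(gaussianReal 0 1) := by
  rw [← pi_map_eval d i, integral_map (measurable_pi_apply i).aemeasurable]
  rw [pi_map_eval d i]
  exact hg.aestronglyMeasurable

private lemma integral_stdGaussian {d : ℕ} (g : EuclideanSpace ℝ (Fin d) → ℝ)
    (hg : AEStronglyMeasurable g (stdGaussian d)) :
    ∫ v, g v ∂(stdGaussian d)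
      = ∫ y, g ((EuclideanSpace.equiv (Fin d) ℝ).symm y)
          ∂(Measure.pi fun _ : Fin d => gaussianReal 0 1) :=
  integral_map (EuclideanSpace.equiv (Fin d) ℝ).symm.continuous.measurable.aemeasurable hg

private lemma integrable_stdGaussian_iff {d : ℕ} (g : EuclideanSpace ℝ (Fin d) → ℝ)
    (hg : AEStronglyMeasurable g (stdGaussian d)) :
    Integrable g (stdGaussian d)
      ↔ Integrable (fun y => g ((EuclideanSpace.equiv (Fin d) ℝ).symm y))
          (Measure.pi fun _ : Fin d => gaussianReal 0 1) :=
  integrable_map_measure hg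
    (EuclideanSpace.equiv (Fin d) ℝ).symm.continuous.measurable.aemeasurable

instance (d : ℕ) : IsProbabilityMeasure (stdGaussian d) :=
  Measure.isProbabilityMeasure_map
    (EuclideanSpace.equiv (Fin d) ℝ).symm.continuous.measurable.aemeasurable

private lemma norm_sq_equiv_symm {d : ℕ} (y : Fin d → ℝ) :
    ‖(EuclideanSpace.equiv (Fin d) ℝ).symm y‖ ^ 2 = ∑ i, (y i) ^ 2 := by
  rw [EuclideanSpace.norm_eq, Real.sq_sqrt (by positivity)]
  congr 1; ext i
  simp [Real.norm_eq_abs, sq_abs]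

private lemma integrable_norm_sq_std (d : ℕ) :
    Integrable (fun v => ‖v‖ ^ 2) (stdGaussian d) := by
  rw [integrable_stdGaussian_iff _ (continuous_norm.fun_pow 2).aestronglyMeasurable]
  have h : (fun y : Fin d → ℝ => ‖(EuclideanSpace.equiv (Fin d) ℝ).symm y‖ ^ 2)
      = fun y => ∑ i, (y i) ^ 2 := by ext y; exact norm_sq_equiv_symm y
  rw [h]
  exact integrable_finset_sum _ fun i _ => integrable_eval_pi integrable_sq_gauss i

private lemma integral_norm_sq_std (d : ℕ) : ∫ v, ‖v‖ ^ 2 ∂(stdGaussian d) = d := by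
  rw [integral_stdGaussian _ (continuous_norm.fun_pow 2).aestronglyMeasurable]
  have h : (fun y : Fin d → ℝ => ‖(EuclideanSpace.equiv (Fin d) ℝ).symm y‖ ^ 2)
      = fun y => ∑ i, (y i) ^ 2 := by ext y; exact norm_sq_equiv_symm y
  rw [h, integral_finset_sum _ fun i _ => integrable_eval_pi integrable_sq_gauss i]
  have h2 : ∀ i : Fin d, ∫ y, (y i) ^ 2 ∂(Measure.pi fun _ : Fin d => gaussianReal 0 1) = 1 := by
    intro i
    rw [integral_eval_pi (g := fun x => x ^ 2) (by fun_prop) i, integral_sq_gauss]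
  simp [h2]

private lemma inner_equiv_symm {d : ℕ} (c : EuclideanSpace ℝ (Fin d)) (y : Fin d → ℝ) :
    (inner ℝ c ((EuclideanSpace.equiv (Fin d) ℝ).symm y) : ℝ) = ∑ i, c i * y i := by
  rw [PiLp.inner_apply]
  simp [mul_comm]

private lemma integrable_inner_std {d : ℕ} (c : EuclideanSpace ℝ (Fin d)) :
    Integrable (fun v => (inner ℝ c v : ℝ)) (stdGaussian d) := by
  have hg : AEStronglyMeasurable (fun v : EuclideanSpace ℝ (Fin d) => (inner ℝ c v : ℝ))
      (stdGaussian d) :=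
    Continuous.aestronglyMeasurable (continuous_const.inner continuous_id)
  rw [integrable_stdGaussian_iff _ hg]
  have h : (fun y : Fin d → ℝ => (inner ℝ c ((EuclideanSpace.equiv (Fin d) ℝ).symm y) : ℝ))
      = fun y => ∑ i, c i * y i := by ext y; exact inner_equiv_symm c y
  rw [h]
  exact integrable_finset_sum _ fun i _ =>
    ((integrable_eval_pi integrable_id_gauss i).const_mul _)

private lemma integral_inner_std {d : ℕ} (c : EuclideanSpace ℝ (Fin d)) :
    ∫ v, (inner ℝ c v : ℝ) ∂(stdGaussian d) = 0 := by
  have hg : AEStronglyMeasurable (fun v : EuclideanSpace ℝ (Fin d) => (inner ℝ c v : ℝ))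
      (stdGaussian d) :=
    Continuous.aestronglyMeasurable (continuous_const.inner continuous_id)
  rw [integral_stdGaussian _ hg]
  have h : (fun y : Fin d → ℝ => (inner ℝ c ((EuclideanSpace.equiv (Fin d) ℝ).symm y) : ℝ))
      = fun y => ∑ i, c i * y i := by ext y; exact inner_equiv_symm c y
  rw [h, integral_finset_sum _ fun i _ =>
    ((integrable_eval_pi integrable_id_gauss i).const_mul _)]
  have h3 : ∀ i : Fin d, ∫ y, c i * y i ∂(Measure.pi fun _ : Fin d => gaussianReal 0 1) = 0 := by
    intro i
    rw [integral_const_mul, integral_eval_pi (g := fun x => x) measurable_id, integral_id_gauss,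
      mul_zero]
  simp [h3]

private lemma taylor_bound' {d : ℕ} (f : EuclideanSpace ℝ (Fin d) → ℝ) (L₁ : ℝ) (hL : 0 ≤ L₁)
    (hdiff : Differentiable ℝ f)
    (hgrad : ∀ x y, ‖gradient f y - gradient f x‖ ≤ L₁ * ‖y - x‖)
    (x u : EuclideanSpace ℝ (Fin d)) :
    |f (x + u) - f x - ⟪gradient f x, u⟫_ℝ| ≤ L₁ / 2 * ‖u‖ ^ 2 := by
  have hgc : Continuous (gradient f) := by
    refine (LipschitzWith.of_dist_le_mul (K := ⟨L₁, hL⟩) fun a b => ?_).continuous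
    rw [dist_eq_norm]
    rw [dist_eq_norm]
    exact hgrad b a
  have hline : ∀ t : ℝ, HasDerivAt (fun t : ℝ => x + t • u) u t := by
    intro t
    simpa using ((hasDerivAt_id t).smul_const u).const_add x
  have hφ : ∀ t : ℝ, HasDerivAt (fun t : ℝ => f (x + t • u))
      ⟪gradient f (x + t • u), u⟫_ℝ t := by
    intro t
    have hg := (hdiff (x + t • u)).hasGradientAt
    have := hg.hasFDerivAt.comp_hasDerivAt t (hline t)
    simpa [Function.comp_def] using this
  have hcont : Continuous fun t : ℝ => ⟪gradient f (x + t • u), u⟫_ℝ :=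
    Continuous.inner (hgc.comp (by continuity)) continuous_const
  have Ieq : ∫ t in (0:ℝ)..1, ⟪gradient f (x + t • u), u⟫_ℝ = f (x + u) - f x := by
    have := intervalIntegral.integral_eq_sub_of_hasDerivAt (fun t _ => hφ t)
      (hcont.intervalIntegrable 0 1)
    simpa using this
  have Ieq2 : f (x + u) - f x - ⟪gradient f x, u⟫_ℝ
      = ∫ t in (0:ℝ)..1, (⟪gradient f (x + t • u), u⟫_ℝ - ⟪gradient f x, u⟫_ℝ) := by
    rw [intervalIntegral.integral_sub (hcont.intervalIntegrable 0 1)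
      (intervalIntegrable_const), Ieq]
    simp
  rw [Ieq2]
  have hbound : ∀ t ∈ Set.uIoc (0:ℝ) 1,
      ‖⟪gradient f (x + t • u), u⟫_ℝ - ⟪gradient f x, u⟫_ℝ‖ ≤ (L₁ * ‖u‖ ^ 2) * t := by
    intro t ht
    rw [Set.uIoc_of_le (by norm_num : (0:ℝ) ≤ 1)] at ht
    have ht0 : 0 ≤ t := le_of_lt ht.1
    rw [← inner_sub_left]
    calc ‖⟪gradient f (x + t • u) - gradient f x, u⟫_ℝ‖
        ≤ ‖gradient f (x + t • u) - gradient f x‖ * ‖u‖ := norm_inner_le_norm _ _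
      _ ≤ (L₁ * ‖x + t • u - x‖) * ‖u‖ :=
          mul_le_mul_of_nonneg_right (hgrad x (x + t • u)) (norm_nonneg u)
      _ = (L₁ * ‖u‖ ^ 2) * t := by
          rw [add_sub_cancel_left, norm_smul, Real.norm_eq_abs, abs_of_nonneg ht0]; ring
  have key : ‖∫ t in (0:ℝ)..1, (⟪gradient f (x + t • u), u⟫_ℝ - ⟪gradient f x, u⟫_ℝ)‖
      ≤ |∫ t in (0:ℝ)..1, (L₁ * ‖u‖ ^ 2) * t| :=
    intervalIntegral.norm_integral_le_abs_of_norm_le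
      ((ae_restrict_iff' measurableSet_uIoc).2 (ae_of_all _ hbound))
      ((continuous_const.mul continuous_id).intervalIntegrable 0 1)
  rw [Real.norm_eq_abs] at key
  refine key.trans ?_
  rw [intervalIntegral.integral_const_mul, integral_id]
  rw [show ((1:ℝ)^2 - 0^2)/2 = 1/2 by norm_num, abs_of_nonneg (by positivity)]
  ring_nf
  exact le_refl _

end StdGaussAux

open scoped InnerProductSpace in
/-- if `f` has `L₁`-Lipschitz gradient, then its Gaussian smoothing
satisfies `|f_ν(x) − f(x)| ≤ (ν²/2) L₁ d`. -/
theorem gaussian_smoothing_close_of_gradient_lipschitz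
    (d : ℕ) (f : EuclideanSpace ℝ (Fin d) → ℝ) (L₁ : ℝ)
    (hdiff : Differentiable ℝ f)
    (hgrad : ∀ x y, ‖gradient f y - gradient f x‖ ≤ L₁ * ‖y - x‖)
    (ν : ℝ) (hν : 0 < ν) (x : EuclideanSpace ℝ (Fin d)) :
    |(∫ v, f (x + ν • v) ∂(stdGaussian d)) - f x| ≤ ν ^ 2 / 2 * L₁ * d := by
  by_cases hd : d = 0
  · subst hd
    have hx : ∀ v : EuclideanSpace ℝ (Fin 0), x + ν • v = x := by
      intro v
      rw [Subsingleton.elim v 0]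
      simp
    simp only [hx]
    rw [integral_const]
    simp
  · -- L₁ is nonnegative
    have hL : 0 ≤ L₁ := by
      have i0 : Fin d := ⟨0, Nat.pos_of_ne_zero hd⟩
      have h := hgrad 0 (EuclideanSpace.single i0 1)
      have hn : ‖(EuclideanSpace.single i0 (1:ℝ)) - 0‖ = 1 := by
        simp [EuclideanSpace.norm_single]
      rw [hn, mul_one] at h
      exact le_trans (norm_nonneg _) h
    set c : EuclideanSpace ℝ (Fin d) := gradient f x with hc
    set g : EuclideanSpace ℝ (Fin d) → ℝ :=
      fun v => f (x + ν • v) - f x - ⟪c, ν • v⟫_ℝ with hgdef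
    have hgb : ∀ v, |g v| ≤ (L₁ / 2 * ν ^ 2) * ‖v‖ ^ 2 := by
      intro v
      have := taylor_bound' f L₁ hL hdiff hgrad x (ν • v)
      calc |g v| ≤ L₁ / 2 * ‖ν • v‖ ^ 2 := this
        _ = (L₁ / 2 * ν ^ 2) * ‖v‖ ^ 2 := by
            rw [norm_smul, mul_pow, Real.norm_eq_abs, sq_abs]; ring
    have hgcont : Continuous g := by
      apply Continuous.sub
      · apply Continuous.sub
        · exact hdiff.continuous.comp (continuous_const.add (continuous_const.fun_smul continuous_id))
        · exact continuous_const
      · exact Continuous.inner continuous_const (continuous_const.fun_smul continuous_id)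
    have hgi : Integrable g (stdGaussian d) := by
      refine Integrable.mono' ((integrable_norm_sq_std d).const_mul (L₁ / 2 * ν ^ 2))
        hgcont.aestronglyMeasurable (ae_of_all _ fun v => ?_)
      simpa [Real.norm_eq_abs] using hgb v
    have hlin : Integrable (fun v => f x + ν * ⟪c, v⟫_ℝ) (stdGaussian d) :=
      (integrable_const _).add ((integrable_inner_std c).const_mul ν)
    have hsum : (fun v : EuclideanSpace ℝ (Fin d) => f (x + ν • v))
        = fun v => g v + (f x + ν * ⟪c, v⟫_ℝ) := by
      ext v
      rw [hgdef]
      simp only [real_inner_smul_right]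
      ring
    have hI : ∫ v, f (x + ν • v) ∂(stdGaussian d) = (∫ v, g v ∂(stdGaussian d)) + f x := by
      rw [hsum, integral_add hgi hlin, integral_add (integrable_const _)
        ((integrable_inner_std c).const_mul ν), integral_const, integral_const_mul,
        integral_inner_std c]
      simp
    rw [hI, add_sub_cancel_right]
    have habs : |∫ v, g v ∂(stdGaussian d)| ≤ ∫ v, |g v| ∂(stdGaussian d) := by
      simpa [Real.norm_eq_abs] using
        norm_integral_le_integral_norm (μ := stdGaussian d) g
    refine habs.trans ?_
    have hmono : ∫ v, |g v| ∂(stdGaussian d)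
        ≤ ∫ v, (L₁ / 2 * ν ^ 2) * ‖v‖ ^ 2 ∂(stdGaussian d) :=
      integral_mono hgi.abs ((integrable_norm_sq_std d).const_mul _) fun v => hgb v
    refine hmono.trans ?_
    rw [integral_const_mul, integral_norm_sq_std]
    ring_nf
    exact le_refl _
end

section
/- If f : ℝ^d → ℝ is differentiable with L₁-Lipschitz gradient, then the Gaussian smoothing f_ν is differentiable with ∇f_ν(x) = E_{v}[∇f(x + ν v)], and ∇f_ν is L₁-Lipschitz. -/
open MeasureTheory ProbabilityTheory

open Real Filter Topology

lemma integrable_sq_gaussianReal : Integrable (fun x : ℝ => x ^ 2) (gaussianReal 0 1) := by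
  rw [gaussianReal_of_var_ne_zero 0 one_ne_zero,
    integrable_withDensity_iff (measurable_gaussianPDF 0 1)
      (ae_of_all _ fun x => ENNReal.ofReal_lt_top)]
  have h0 : ∀ x : ℝ, (gaussianPDF 0 1 x).toReal = gaussianPDFReal 0 1 x := fun x =>
    ENNReal.toReal_ofReal (gaussianPDFReal_nonneg 0 1 x)
  simp_rw [h0, gaussianPDFReal_def]
  have h1 : Integrable (fun x : ℝ => x ^ (2:ℝ) * Real.exp (-(1/2) * x ^ 2)) :=
    integrable_rpow_mul_exp_neg_mul_sq (by norm_num) (by norm_num)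
  have h2 : ∀ x : ℝ, x ^ (2:ℝ) = x ^ 2 := fun x => by
    rw [show (2:ℝ) = ((2:ℕ):ℝ) by norm_num, Real.rpow_natCast]
  simp_rw [h2] at h1
  have := h1.const_mul ((Real.sqrt (2 * π * 1))⁻¹)
  refine this.congr (ae_of_all _ fun x => ?_)
  push_cast
  rw [show -(x-0:ℝ)^2/(2*1) = -(1/2) * x ^ 2 by ring]
  ring

lemma map_eval_pi_gaussian {d : ℕ} (i : Fin d) :
    Measure.map (Function.eval i) (Measure.pi fun _ : Fin d => gaussianReal 0 1)
      = gaussianReal 0 1 := by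
  ext s hs
  rw [Measure.map_apply (measurable_pi_apply i) hs, Set.eval_preimage, Measure.pi_pi]
  rw [Finset.prod_eq_single i (fun j _ hj => by simp [Function.update_of_ne hj])
    (fun h => absurd (Finset.mem_univ i) h)]
  simp

lemma integrable_eval_sq {d : ℕ} (i : Fin d) :
    Integrable (fun u : Fin d → ℝ => (u i) ^ 2)
      (Measure.pi fun _ : Fin d => gaussianReal 0 1) := by
  have h : MeasurePreserving (Function.eval i)
      (Measure.pi fun _ : Fin d => gaussianReal 0 1) (gaussianReal 0 1) :=
    ⟨measurable_pi_apply i, map_eval_pi_gaussian i⟩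
  exact (h.integrable_comp (by fun_prop)).mpr integrable_sq_gaussianReal

instance stdGaussian_isProb (d : ℕ) : IsProbabilityMeasure (stdGaussian d) :=
  Measure.isProbabilityMeasure_map
    ((EuclideanSpace.equiv (Fin d) ℝ).symm.continuous.measurable.aemeasurable)

lemma integrable_norm_sq_stdGaussian (d : ℕ) :
    Integrable (fun v : EuclideanSpace ℝ (Fin d) => ‖v‖ ^ 2) (stdGaussian d) := by
  unfold _root_.stdGaussian
  rw [integrable_map_measure (g := fun v : EuclideanSpace ℝ (Fin d) => ‖v‖ ^ 2) ((continuous_norm.pow 2).aestronglyMeasurable)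
    (EuclideanSpace.equiv (Fin d) ℝ).symm.continuous.measurable.aemeasurable]
  have : (fun v : EuclideanSpace ℝ (Fin d) => ‖v‖ ^ 2) ∘ (EuclideanSpace.equiv (Fin d) ℝ).symm
      = fun u : Fin d → ℝ => ∑ i, (u i) ^ 2 := by
    funext u
    simp only [Function.comp_apply, EuclideanSpace.norm_eq]
    rw [Real.sq_sqrt (by positivity)]
    simp [Real.norm_eq_abs, sq_abs]
  rw [this]
  exact integrable_finset_sum _ fun i _ => integrable_eval_sq i

lemma integrable_norm_stdGaussian (d : ℕ) :
    Integrable (fun v : EuclideanSpace ℝ (Fin d) => ‖v‖) (stdGaussian d) := by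
  refine ((integrable_const 1).add (integrable_norm_sq_stdGaussian d)).mono'
    (by fun_prop) (ae_of_all _ fun v => ?_)
  simp only [norm_norm, Pi.add_apply]
  nlinarith [sq_nonneg (‖v‖ - 1), norm_nonneg v]

lemma descent_aux {d : ℕ} {f : EuclideanSpace ℝ (Fin d) → ℝ} {L : ℝ}
    (hdiff : Differentiable ℝ f)
    (hgrad : ∀ x y, ‖gradient f y - gradient f x‖ ≤ L * ‖y - x‖)
    (hL : 0 ≤ L) (x y : EuclideanSpace ℝ (Fin d)) :
    |f y - f x - inner ℝ (gradient f x) (y - x)| ≤ L * ‖y - x‖ * ‖y - x‖ := by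
  have hfd : ∀ z, fderiv ℝ f z
      = InnerProductSpace.toDual ℝ (EuclideanSpace ℝ (Fin d)) (gradient f z) := fun z => by
    rw [gradient, LinearIsometryEquiv.apply_symm_apply]
  have bound : ∀ z ∈ Metric.closedBall x ‖y - x‖,
      ‖fderiv ℝ f z - fderiv ℝ f x‖ ≤ L * ‖y - x‖ := by
    intro z hz
    rw [hfd z, hfd x, ← LinearIsometryEquiv.map_sub, LinearIsometryEquiv.norm_map]
    exact (hgrad x z).trans (mul_le_mul_of_nonneg_left
      (by rwa [← dist_eq_norm, ← Metric.mem_closedBall]) hL)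
  have hys : y ∈ Metric.closedBall x ‖y - x‖ := by
    rw [Metric.mem_closedBall, dist_eq_norm]
  have key := (convex_closedBall x ‖y - x‖).norm_image_sub_le_of_norm_fderiv_le'
    (fun z _ => hdiff z) bound
    (Metric.mem_closedBall_self (norm_nonneg _)) hys
  rw [hfd x] at key
  simpa [Real.norm_eq_abs, InnerProductSpace.toDual_apply_apply, mul_assoc] using key

/-- if `f` is `C¹` with `L₁`-Lipschitz gradient, its Gaussian
smoothing `f_ν` is differentiable with `∇f_ν(x) = E_v[∇f(x + ν v)]`, and
`∇f_ν` is `L₁`-Lipschitz. -/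
theorem gaussian_smoothing_gradient
    (d : ℕ) (f : EuclideanSpace ℝ (Fin d) → ℝ) (L₁ : ℝ)
    (hdiff : Differentiable ℝ f) (hcont : Continuous (gradient f))
    (hgrad : ∀ x y, ‖gradient f y - gradient f x‖ ≤ L₁ * ‖y - x‖)
    (ν : ℝ) (hν : 0 < ν) :
    (∀ x, HasGradientAt (fun z => ∫ v, f (z + ν • v) ∂(stdGaussian d))
        (∫ v, gradient f (x + ν • v) ∂(stdGaussian d)) x) ∧
    (∀ x y, ‖gradient (fun z => ∫ v, f (z + ν • v) ∂(stdGaussian d)) y -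
        gradient (fun z => ∫ v, f (z + ν • v) ∂(stdGaussian d)) x‖ ≤ L₁ * ‖y - x‖) := by
  set μ := stdGaussian d with hμ
  set L := max L₁ 0 with hLdef
  have hL : 0 ≤ L := le_max_right _ _
  have hgrad' : ∀ x y, ‖gradient f y - gradient f x‖ ≤ L * ‖y - x‖ := fun x y =>
    (hgrad x y).trans (mul_le_mul_of_nonneg_right (le_max_left _ _) (norm_nonneg _))
  have hmeas_shift : ∀ z : EuclideanSpace ℝ (Fin d),
      Continuous (fun v : EuclideanSpace ℝ (Fin d) => z + ν • v) := fun z =>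
    continuous_const.add (continuous_id.const_smul ν)
  -- integrability of the gradient integrand
  have hint_g : ∀ z, Integrable (fun v => gradient f (z + ν • v)) μ := by
    intro z
    refine ((integrable_const ‖gradient f z‖).add
      ((integrable_norm_stdGaussian d).const_mul (L * ν))).mono'
      ((hcont.comp (hmeas_shift z)).aestronglyMeasurable) (ae_of_all _ fun v => ?_)
    have h1 : ‖gradient f (z + ν • v) - gradient f z‖ ≤ L * ν * ‖v‖ := by
      have h := hgrad' z (z + ν • v)
      rw [add_sub_cancel_left, norm_smul, Real.norm_eq_abs, abs_of_pos hν, ← mul_assoc] at h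
      exact h
    have h2 := norm_sub_norm_le (gradient f (z + ν • v)) (gradient f z)
    simp only [Pi.add_apply]
    linarith
  -- integrability of the function integrand
  have hint_f : ∀ z, Integrable (fun v => f (z + ν • v)) μ := by
    intro z
    refine (((integrable_const |f z|).add
      ((integrable_norm_stdGaussian d).const_mul (‖gradient f z‖ * ν))).add
      ((integrable_norm_sq_stdGaussian d).const_mul (L * ν ^ 2))).mono'
      ((hdiff.continuous.comp (hmeas_shift z)).aestronglyMeasurable)
      (ae_of_all _ fun v => ?_)
    have hd := descent_aux hdiff hgrad' hL z (z + ν • v)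
    rw [add_sub_cancel_left] at hd
    have hi : |(inner ℝ (gradient f z) (ν • v) : ℝ)| ≤ ‖gradient f z‖ * ‖ν • v‖ :=
      abs_real_inner_le_norm _ _
    have hn : ‖ν • v‖ = ν * ‖v‖ := by
      rw [norm_smul, Real.norm_eq_abs, abs_of_pos hν]
    rw [hn] at hd hi
    have h4 := abs_add_le (f (z + ν • v) - f z - inner ℝ (gradient f z) (ν • v) +
      inner ℝ (gradient f z) (ν • v)) (f z)
    have h5 := abs_add_le (f (z + ν • v) - f z - (inner ℝ (gradient f z) (ν • v) : ℝ))
      (inner ℝ (gradient f z) (ν • v))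
    have he : f (z + ν • v) - f z - (inner ℝ (gradient f z) (ν • v) : ℝ) +
        inner ℝ (gradient f z) (ν • v) + f z = f (z + ν • v) := by ring
    rw [he] at h4
    simp only [Pi.add_apply, Real.norm_eq_abs]
    nlinarith [norm_nonneg v, abs_nonneg (f z)]
  -- inner product of integral
  have hint_i : ∀ z (h : EuclideanSpace ℝ (Fin d)),
      Integrable (fun v => (inner ℝ (gradient f (z + ν • v)) h : ℝ)) μ := fun z h =>
    ((innerSL ℝ (E := EuclideanSpace ℝ (Fin d))).flip h).integrable_comp (hint_g z)
  have main : ∀ x, HasGradientAt (fun z => ∫ v, f (z + ν • v) ∂μ)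
      (∫ v, gradient f (x + ν • v) ∂μ) x := by
    intro x
    have key : ∀ h : EuclideanSpace ℝ (Fin d),
        ‖(∫ v, f (x + h + ν • v) ∂μ) - (∫ v, f (x + ν • v) ∂μ) -
            (inner ℝ (∫ v, gradient f (x + ν • v) ∂μ) h : ℝ)‖
          ≤ L * ‖h‖ * ‖h‖ := by
      intro h
      have hinner : (inner ℝ (∫ v, gradient f (x + ν • v) ∂μ) h : ℝ)
          = ∫ v, (inner ℝ (gradient f (x + ν • v)) h : ℝ) ∂μ := by
        rw [real_inner_comm h (∫ v, gradient f (x + ν • v) ∂μ),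
          ← integral_inner (hint_g x) h]
        exact integral_congr_ae (ae_of_all _ fun v => real_inner_comm _ _)
      have hsub : Integrable (fun v => f (x + h + ν • v) - f (x + ν • v)) μ :=
        (hint_f (x + h)).sub (hint_f x)
      rw [hinner, ← integral_sub (hint_f (x + h)) (hint_f x),
        ← integral_sub hsub (hint_i x h)]
      calc ‖∫ v, (f (x + h + ν • v) - f (x + ν • v) -
              (inner ℝ (gradient f (x + ν • v)) h : ℝ)) ∂μ‖
          ≤ ∫ _, L * ‖h‖ * ‖h‖ ∂μ := by
            refine norm_integral_le_of_norm_le (integrable_const _) (ae_of_all _ fun v => ?_)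
            have hd := descent_aux hdiff hgrad' hL (x + ν • v) (x + h + ν • v)
            have hba : x + h + ν • v - (x + ν • v) = h := by abel
            rw [hba] at hd
            rw [Real.norm_eq_abs]
            exact hd
        _ = L * ‖h‖ * ‖h‖ := by simp
    rw [hasGradientAt_iff_hasFDerivAt, hasFDerivAt_iff_isLittleO_nhds_zero]
    rw [Asymptotics.isLittleO_iff]
    intro c hc
    have hev : ∀ᶠ h : EuclideanSpace ℝ (Fin d) in 𝓝 0, ‖h‖ ≤ c / (L + 1) := by
      have ht : Tendsto (fun h : EuclideanSpace ℝ (Fin d) => ‖h‖) (𝓝 0) (𝓝 0) :=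
        continuous_norm.tendsto' 0 0 norm_zero
      exact ht.eventually (eventually_le_nhds (by positivity))
    filter_upwards [hev] with h hh
    have hLc : L * ‖h‖ ≤ c := by
      have h1 : L * ‖h‖ ≤ L * (c / (L + 1)) := mul_le_mul_of_nonneg_left hh hL
      have h2 : L * (c / (L + 1)) ≤ c := by
        rw [mul_div_assoc', div_le_iff₀ (by positivity)]
        nlinarith [hc.le]
      linarith
    simp only [InnerProductSpace.toDual_apply_apply]
    exact le_trans (key h) (mul_le_mul_of_nonneg_right hLc (norm_nonneg h))
  refine ⟨main, fun x y => ?_⟩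
  rw [(main y).gradient, (main x).gradient, ← integral_sub (hint_g y) (hint_g x)]
  calc ‖∫ v, (gradient f (y + ν • v) - gradient f (x + ν • v)) ∂μ‖
      ≤ ∫ _, L₁ * ‖y - x‖ ∂μ := by
        refine norm_integral_le_of_norm_le (integrable_const _) (ae_of_all _ fun v => ?_)
        have h := hgrad (x + ν • v) (y + ν • v)
        rwa [show y + ν • v - (x + ν • v) = y - x by abel] at h
    _ = L₁ * ‖y - x‖ := by simp
end

section
/- Let f : ℝ^d → ℝ be L₀-Lipschitz, μ > 0, ν > 0, and fix x, u with h(x) = f(x + μ u) − f(x) ≠ 0. For independent v₁, v₂ ~ N(0, I_d), define h_ν(x) = f(x + μ u + ν v₁) − f(x + ν v₂). Then P(sign(h_ν(x)) ≠ sign(h(x))) ≤ 2 L₀ ν √d / |h(x)|. -/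
open MeasureTheory ProbabilityTheory

section Auxiliary

open Real Filter
open scoped ENNReal

lemma abs_le_abs_sub_of_sign_ne {a b : ℝ} (hb : b ≠ 0)
    (h : Real.sign a ≠ Real.sign b) : |b| ≤ |a - b| := by
  by_contra hcon
  push_neg at hcon
  rcases hb.lt_or_gt with hb' | hb'
  · have h1 : a - b ≤ |a - b| := le_abs_self _
    have : a < 0 := by
      have : |b| = -b := abs_of_neg hb'
      linarith [this ▸ hcon]
    exact h (by rw [Real.sign_of_neg this, Real.sign_of_neg hb'])
  · have h1 : -(a - b) ≤ |a - b| := neg_le_abs _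
    have : 0 < a := by
      have : |b| = b := abs_of_pos hb'
      linarith [this ▸ hcon]
    exact h (by rw [Real.sign_of_pos this, Real.sign_of_pos hb'])

lemma integrable_sq_mul_exp :
    Integrable (fun x : ℝ => x * (x * Real.exp (-(1/2) * x ^ 2))) := by
  have := integrable_rpow_mul_exp_neg_mul_sq (by norm_num : (0:ℝ) < 1/2) (s := 2) (by norm_num)
  refine this.congr ?_
  filter_upwards with x
  rw [show ((2:ℝ)) = ((2:ℕ):ℝ) by norm_num, Real.rpow_natCast]
  ring

lemma integral_sq_mul_exp : ∫ x : ℝ, x * (x * Real.exp (-(1/2) * x ^ 2)) = Real.sqrt (2 * π) := by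
  have hb : (0:ℝ) < 1/2 := by norm_num
  have hu : ∀ x : ℝ, HasDerivAt (fun y : ℝ => y) 1 x := fun x => hasDerivAt_id x
  have hv : ∀ x : ℝ, HasDerivAt (fun y : ℝ => -Real.exp (-(1/2) * y ^ 2))
      (x * Real.exp (-(1/2) * x ^ 2)) x := by
    intro x
    have h1 : HasDerivAt (fun y : ℝ => -(1/2) * y ^ 2) (-(1/2) * (2 * x)) x :=
      (hasDerivAt_pow 2 x).const_mul _ |>.congr_deriv (by ring_nf)
    have := (h1.exp).neg
    refine this.congr_deriv ?_
    ring
  have hu'v : Integrable (fun x : ℝ => (1:ℝ) * (-Real.exp (-(1/2) * x ^ 2))) := by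
    refine ((integrable_exp_neg_mul_sq hb).neg).congr ?_
    filter_upwards with x; simp [Pi.neg_apply]
  have huv : Integrable (fun x : ℝ => x * (-Real.exp (-(1/2) * x ^ 2))) := by
    refine ((integrable_mul_exp_neg_mul_sq hb).neg).congr ?_
    filter_upwards with x; simp [Pi.neg_apply]
  have key := integral_mul_deriv_eq_deriv_mul_of_integrable (fun x _ => hu x) (fun x _ => hv x)
    (by exact integrable_sq_mul_exp) (by exact hu'v) (by exact huv)
  simp only [one_mul, mul_neg, integral_neg, neg_neg] at key
  rw [key, integral_gaussian]
  rw [show π / (1/2) = 2 * π by ring]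

lemma lintegral_sq_gaussianReal :
    ∫⁻ x : ℝ, ENNReal.ofReal (x ^ 2) ∂(gaussianReal 0 1) = 1 := by
  rw [gaussianReal_of_var_ne_zero 0 one_ne_zero,
    lintegral_withDensity_eq_lintegral_mul _ (measurable_gaussianPDF 0 1)
      (by fun_prop)]
  have hpdf : ∀ x : ℝ, gaussianPDFReal 0 1 x = (Real.sqrt (2 * π))⁻¹ * Real.exp (-(1/2) * x ^ 2) := by
    intro x
    rw [gaussianPDFReal]
    norm_num
    rw [show -x ^ 2 / 2 = -(1/2) * x ^ 2 by ring]
    left; ring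
  have heq : ∀ x : ℝ, (gaussianPDF 0 1 * fun x => ENNReal.ofReal (x ^ 2)) x
      = ENNReal.ofReal ((Real.sqrt (2 * π))⁻¹ * (x * (x * Real.exp (-(1/2) * x ^ 2)))) := by
    intro x
    simp only [Pi.mul_apply, gaussianPDF, ← ENNReal.ofReal_mul (gaussianPDFReal_nonneg 0 1 x)]
    rw [hpdf]
    ring_nf
  rw [lintegral_congr heq]
  rw [← ofReal_integral_eq_lintegral_ofReal
      (integrable_sq_mul_exp.const_mul _)
      (by
        filter_upwards with x
        have hx : x * (x * Real.exp (-(1/2) * x ^ 2)) = x ^ 2 * Real.exp (-(1/2) * x ^ 2) := by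
          ring
        rw [hx]
        positivity)]
  rw [integral_const_mul, integral_sq_mul_exp,
    inv_mul_cancel₀ (by positivity : Real.sqrt (2 * π) ≠ 0)]
  simp

lemma map_eval_pi {ι : Type*} [Fintype ι] [DecidableEq ι] {α : ι → Type*}
    [∀ i, MeasurableSpace (α i)]
    (μ : ∀ i, Measure (α i)) [∀ i, IsProbabilityMeasure (μ i)] (i : ι) :
    (Measure.pi μ).map (Function.eval i) = μ i := by
  ext s hs
  rw [Measure.map_apply (measurable_pi_apply i) hs]
  have hpre : Function.eval i ⁻¹' s
      = Set.pi Set.univ (Function.update (fun j => (Set.univ : Set (α j))) i s) := by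
    ext z
    simp only [Set.mem_preimage, Set.mem_univ_pi, Function.eval]
    constructor
    · intro hz j
      rcases eq_or_ne j i with rfl | hj
      · simpa using hz
      · simp [Function.update_of_ne hj]
    · intro hz
      simpa using hz i
  rw [hpre, Measure.pi_pi]
  rw [Finset.prod_eq_single i (fun j _ hj => by simp [Function.update_of_ne hj])
    (by simp)]
  simp

instance inst_s8 (d : ℕ) : IsProbabilityMeasure (stdGaussian d) :=
  Measure.isProbabilityMeasure_map
    ((EuclideanSpace.equiv (Fin d) ℝ).symm.continuous.measurable).aemeasurable

lemma lintegral_normsq_stdGaussian (d : ℕ) :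
    ∫⁻ y, ENNReal.ofReal (‖y‖ ^ 2) ∂(stdGaussian d) = d := by
  rw [_root_.stdGaussian, lintegral_map ((measurable_norm.pow_const 2).ennreal_ofReal)
    (EuclideanSpace.equiv (Fin d) ℝ).symm.continuous.measurable]
  have hnorm : ∀ z : Fin d → ℝ,
      ‖(EuclideanSpace.equiv (Fin d) ℝ).symm z‖ ^ 2 = ∑ i, z i ^ 2 := by
    intro z
    rw [EuclideanSpace.norm_eq, Real.sq_sqrt (by positivity)]
    simp [sq_abs]
  simp_rw [hnorm]
  have hsum : ∀ z : Fin d → ℝ, ENNReal.ofReal (∑ i, z i ^ 2)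
      = ∑ i, ENNReal.ofReal (z i ^ 2) := fun z =>
    ENNReal.ofReal_sum_of_nonneg (fun i _ => sq_nonneg _)
  simp_rw [hsum]
  rw [lintegral_finset_sum _ (fun i _ => ((measurable_pi_apply i).pow_const 2).ennreal_ofReal)]
  have hone : ∀ i : Fin d, ∫⁻ z : Fin d → ℝ, ENNReal.ofReal (z i ^ 2)
      ∂(Measure.pi fun _ : Fin d => gaussianReal 0 1) = 1 := by
    intro i
    have := lintegral_map (μ := Measure.pi fun _ : Fin d => gaussianReal 0 1)
      (g := Function.eval i) (f := fun t : ℝ => ENNReal.ofReal (t ^ 2))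
      (by fun_prop) (measurable_pi_apply i)
    rw [map_eval_pi (fun _ : Fin d => gaussianReal 0 1) i, lintegral_sq_gaussianReal] at this
    exact this.symm
  simp [hone]

lemma lintegral_norm_stdGaussian_le (d : ℕ) :
    ∫⁻ y, ENNReal.ofReal ‖y‖ ∂(stdGaussian d) ≤ ENNReal.ofReal (Real.sqrt d) := by
  rcases Nat.eq_zero_or_pos d with rfl | hd
  · have : ∀ y : EuclideanSpace ℝ (Fin 0), ‖y‖ = 0 := by
      intro y
      rw [EuclideanSpace.norm_eq]
      simp
    simp [this]
  · set c : ℝ := Real.sqrt d with hc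
    have hc0 : 0 < c := Real.sqrt_pos.mpr (by exact_mod_cast hd)
    have hptwise : ∀ y : EuclideanSpace ℝ (Fin d),
        ENNReal.ofReal ‖y‖ ≤ ENNReal.ofReal (1/(2*c)) * ENNReal.ofReal (‖y‖ ^ 2)
          + ENNReal.ofReal (c/2) := by
      intro y
      rw [← ENNReal.ofReal_mul (by positivity), ← ENNReal.ofReal_add (by positivity) (by positivity)]
      apply ENNReal.ofReal_le_ofReal
      have key : ‖y‖ ≤ (‖y‖ ^ 2 + c ^ 2) / (2 * c) := by
        rw [le_div_iff₀ (by positivity)]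
        nlinarith [sq_nonneg (‖y‖ - c)]
      have heq2 : (‖y‖ ^ 2 + c ^ 2) / (2 * c) = 1/(2*c) * ‖y‖ ^ 2 + c/2 := by
        field_simp
      linarith [heq2 ▸ key]
    calc ∫⁻ y, ENNReal.ofReal ‖y‖ ∂(stdGaussian d)
        ≤ ∫⁻ y, (ENNReal.ofReal (1/(2*c)) * ENNReal.ofReal (‖y‖ ^ 2)
            + ENNReal.ofReal (c/2)) ∂(stdGaussian d) := lintegral_mono hptwise
      _ = ENNReal.ofReal (1/(2*c)) * (d : ℝ≥0∞) + ENNReal.ofReal (c/2) := by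
          rw [lintegral_add_right _ measurable_const, lintegral_const_mul _ (by fun_prop),
            lintegral_normsq_stdGaussian, lintegral_const, measure_univ, mul_one]
      _ = ENNReal.ofReal (Real.sqrt d) := by
          have hd' : ((d:ℕ) : ℝ≥0∞) = ENNReal.ofReal (d : ℝ) := by
            simp [ENNReal.ofReal_natCast]
          rw [hd', ← ENNReal.ofReal_mul (by positivity), ← ENNReal.ofReal_add (by positivity) (by positivity)]
          congr 1
          have : (d : ℝ) = c ^ 2 := by rw [hc, Real.sq_sqrt (by positivity)]
          rw [this]
          field_simp
          rw [Real.sqrt_sq hc0.le]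
          ring

end Auxiliary

open scoped ENNReal

/-- Theorem 3 of the paper: the probability that the random noise
defense flips the sign of the search criterion is at most `2 L₀ ν √d / |h(x)|`. -/
theorem sign_flip_probability_bound
    {Ω : Type*} [MeasureSpace Ω] [IsProbabilityMeasure (ℙ : Measure Ω)]
    (d : ℕ) (f : EuclideanSpace ℝ (Fin d) → ℝ) (L₀ : ℝ) (hL₀ : 0 ≤ L₀)
    (hf : ∀ x y, |f y - f x| ≤ L₀ * ‖y - x‖)
    (μ ν : ℝ) (hμ : 0 < μ) (hν : 0 < ν)
    (u x : EuclideanSpace ℝ (Fin d))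
    (hh : f (x + μ • u) - f x ≠ 0)
    (v₁ v₂ : Ω → EuclideanSpace ℝ (Fin d))
    (hv₁m : Measurable v₁) (hv₂m : Measurable v₂)
    (hv₁ : Measure.map v₁ ℙ = stdGaussian d)
    (hv₂ : Measure.map v₂ ℙ = stdGaussian d)
    (hindep : IndepFun v₁ v₂) :
    (ℙ {ω | Real.sign (f (x + μ • u + ν • v₁ ω) - f (x + ν • v₂ ω)) ≠
        Real.sign (f (x + μ • u) - f x)}).toReal ≤
      2 * L₀ * ν * Real.sqrt d / |f (x + μ • u) - f x| := by
  have hfc : Continuous f := by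
    have : LipschitzWith (Real.toNNReal L₀) f := by
      apply LipschitzWith.of_dist_le_mul
      intro a b
      rw [Real.dist_eq, dist_eq_norm, Real.coe_toNNReal L₀ hL₀]
      exact hf b a
    exact this.continuous
  set h : ℝ := f (x + μ • u) - f x with hdef
  set D : Ω → ℝ := fun ω => (f (x + μ • u + ν • v₁ ω) - f (x + ν • v₂ ω)) - h with hD
  have habs : 0 < |h| := abs_pos.mpr hh
  -- measurability
  have hm1 : Measurable fun ω => x + μ • u + ν • v₁ ω :=
    (hv₁m.const_smul ν).const_add _
  have hm2 : Measurable fun ω => x + ν • v₂ ω :=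
    (hv₂m.const_smul ν).const_add _
  have hDm : Measurable fun ω => ENNReal.ofReal |D ω| :=
    ((((hfc.measurable.comp hm1).sub (hfc.measurable.comp hm2)).sub
      measurable_const).abs).ennreal_ofReal
  -- event inclusion
  have hsub : {ω | Real.sign (f (x + μ • u + ν • v₁ ω) - f (x + ν • v₂ ω)) ≠ Real.sign h}
      ⊆ {ω | ENNReal.ofReal |h| ≤ ENNReal.ofReal |D ω|} := by
    intro ω hω
    exact ENNReal.ofReal_le_ofReal (abs_le_abs_sub_of_sign_ne hh hω)
  -- Markov
  have markov := mul_meas_ge_le_lintegral₀ (μ := (ℙ : Measure Ω)) hDm.aemeasurable (ENNReal.ofReal |h|)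
  -- pointwise bound
  have hpt : ∀ ω, ENNReal.ofReal |D ω|
      ≤ ENNReal.ofReal (L₀ * ν) * ENNReal.ofReal ‖v₁ ω‖
        + ENNReal.ofReal (L₀ * ν) * ENNReal.ofReal ‖v₂ ω‖ := by
    intro ω
    rw [← ENNReal.ofReal_mul (by positivity), ← ENNReal.ofReal_mul (by positivity),
      ← ENNReal.ofReal_add (by positivity) (by positivity)]
    apply ENNReal.ofReal_le_ofReal
    have e1 : |f (x + μ • u + ν • v₁ ω) - f (x + μ • u)| ≤ L₀ * (ν * ‖v₁ ω‖) := by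
      have := hf (x + μ • u) (x + μ • u + ν • v₁ ω)
      have harg : (x + μ • u + ν • v₁ ω) - (x + μ • u) = ν • v₁ ω := by abel
      rwa [harg, norm_smul, Real.norm_eq_abs, abs_of_pos hν] at this
    have e2 : |f (x + ν • v₂ ω) - f x| ≤ L₀ * (ν * ‖v₂ ω‖) := by
      have := hf x (x + ν • v₂ ω)
      have harg : (x + ν • v₂ ω) - x = ν • v₂ ω := by abel
      rwa [harg, norm_smul, Real.norm_eq_abs, abs_of_pos hν] at this
    have hDeq : D ω = (f (x + μ • u + ν • v₁ ω) - f (x + μ • u))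
        - (f (x + ν • v₂ ω) - f x) := by
      rw [hD, hdef]; ring
    calc |D ω| ≤ |f (x + μ • u + ν • v₁ ω) - f (x + μ • u)|
          + |f (x + ν • v₂ ω) - f x| := by rw [hDeq]; exact abs_sub _ _
      _ ≤ L₀ * (ν * ‖v₁ ω‖) + L₀ * (ν * ‖v₂ ω‖) := add_le_add e1 e2
      _ = L₀ * ν * ‖v₁ ω‖ + L₀ * ν * ‖v₂ ω‖ := by ring
  -- expectation of norms
  have hE : ∀ v : Ω → EuclideanSpace ℝ (Fin d), Measurable v →
      Measure.map v ℙ = stdGaussian d →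
      ∫⁻ ω, ENNReal.ofReal ‖v ω‖ ≤ ENNReal.ofReal (Real.sqrt d) := by
    intro v hm hmap
    have := lintegral_map (μ := (ℙ : Measure Ω)) (g := v)
      (f := fun y : EuclideanSpace ℝ (Fin d) => ENNReal.ofReal ‖y‖)
      measurable_norm.ennreal_ofReal hm
    rw [hmap] at this
    rw [← this]
    exact lintegral_norm_stdGaussian_le d
  -- integral bound
  have hint : ∫⁻ ω, ENNReal.ofReal |D ω| ≤ ENNReal.ofReal (2 * L₀ * ν * Real.sqrt d) := by
    calc ∫⁻ ω, ENNReal.ofReal |D ω|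
        ≤ ∫⁻ ω, (ENNReal.ofReal (L₀ * ν) * ENNReal.ofReal ‖v₁ ω‖
            + ENNReal.ofReal (L₀ * ν) * ENNReal.ofReal ‖v₂ ω‖) := lintegral_mono hpt
      _ = ENNReal.ofReal (L₀ * ν) * (∫⁻ ω, ENNReal.ofReal ‖v₁ ω‖)
            + ENNReal.ofReal (L₀ * ν) * (∫⁻ ω, ENNReal.ofReal ‖v₂ ω‖) := by
          rw [lintegral_add_left ((hv₁m.norm.ennreal_ofReal).const_mul _),
            lintegral_const_mul _ hv₁m.norm.ennreal_ofReal,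
            lintegral_const_mul _ hv₂m.norm.ennreal_ofReal]
      _ ≤ ENNReal.ofReal (L₀ * ν) * ENNReal.ofReal (Real.sqrt d)
            + ENNReal.ofReal (L₀ * ν) * ENNReal.ofReal (Real.sqrt d) :=
          add_le_add (mul_le_mul_right (hE v₁ hv₁m hv₁) _)
            (mul_le_mul_right (hE v₂ hv₂m hv₂) _)
      _ = ENNReal.ofReal (2 * L₀ * ν * Real.sqrt d) := by
          rw [← ENNReal.ofReal_mul (by positivity), ← ENNReal.ofReal_add (by positivity) (by positivity)]
          congr 1
          ring
  -- combine
  have final : ENNReal.ofReal |h| *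
      ℙ {ω | Real.sign (f (x + μ • u + ν • v₁ ω) - f (x + ν • v₂ ω)) ≠ Real.sign h}
      ≤ ENNReal.ofReal (2 * L₀ * ν * Real.sqrt d) :=
    le_trans (mul_le_mul_right (measure_mono hsub) _) (le_trans markov hint)
  rw [le_div_iff₀ habs]
  have hrhs : (0:ℝ) ≤ 2 * L₀ * ν * Real.sqrt d := by positivity
  have := ENNReal.toReal_mono (by exact ENNReal.ofReal_ne_top) final
  rw [ENNReal.toReal_mul, ENNReal.toReal_ofReal (abs_nonneg _),
    ENNReal.toReal_ofReal hrhs] at this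
  linarith [this]
end
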